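/- Let p be a prime and λ the Haar probability measure on K = SL(2, ℤ_p). For n ∈ ℤ define F_n ⊆ K by: for n ≥ 0, F_n = {k : |k₁₁|_p = p^{−n}, |k₂₁|_p = 1} and F_{−n} = {k : |k₁₁|_p = 1, |k₂₁|_p = p^{−n}}. Then ⋃_{n∈ℤ} F_n has full measure and λ(F_n) = ((p−1)/(p+1)) p^{−|n|} for every n ∈ ℤ. -/

import Mathlib

open MeasureTheory

/-- The compact group `SL(2, ℤ_p)`, realized as the set of `2 × 2` matrices over `ℚ_p` with
determinant `1` and entries of norm at most `1`. -/
def SL2Zp (p : ℕ) [Fact p.Prime] : Set (Matrix (Fin 2) (Fin 2) ℚ_[p]) :=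
  {k | k.det = 1 ∧ ∀ i j, ‖k i j‖ ≤ 1}

/-- For `n ∈ ℤ`, the subset `F_n` of `SL(2, ℤ_p)`: for `n ≥ 0` it consists of the `k` with
`|k₁₁|_p = p^{−n}` and `|k₂₁|_p = 1`, and `F_{−n}` of the `k` with `|k₁₁|_p = 1` and
`|k₂₁|_p = p^{−n}`. -/
def FsetSL2 (p : ℕ) [Fact p.Prime] (n : ℤ) : Set (Matrix (Fin 2) (Fin 2) ℚ_[p]) :=
  {k ∈ SL2Zp p | ‖k 0 0‖ = (p : ℝ) ^ (-(max n 0)) ∧ ‖k 1 0‖ = (p : ℝ) ^ (min n 0)}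

namespace SL2aux

variable {p : ℕ} [Fact p.Prime]

abbrev M2 (p : ℕ) [Fact p.Prime] := Matrix (Fin 2) (Fin 2) ℚ_[p]

@[simp] lemma of_matrix_apply {m n α : Type*} (M : Matrix m n α) (i : m) (j : n) :
    (Matrix.of M : Matrix m n α) i j = M i j := rfl

lemma hp1 : (1:ℝ) < (p:ℝ) := by exact_mod_cast (Fact.out : p.Prime).one_lt
lemma hp0 : (0:ℝ) < (p:ℝ) := lt_trans one_pos hp1

lemma norm_add_le_max (a b : ℚ_[p]) : ‖a + b‖ ≤ max ‖a‖ ‖b‖ := Padic.nonarchimedean a b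

lemma norm_sub_le_max (a b : ℚ_[p]) : ‖a - b‖ ≤ max ‖a‖ ‖b‖ := by
  rw [sub_eq_add_neg]; simpa using Padic.nonarchimedean a (-b)

lemma norm_p_pow' (n : ℕ) : ‖((p:ℚ_[p])^n)‖ = (p:ℝ) ^ (-(n:ℤ)) := by
  simpa using Padic.norm_p_pow (p := p) n

lemma det_eq {k : M2 p} (h : k ∈ SL2Zp p) : k 0 0 * k 1 1 - k 0 1 * k 1 0 = 1 := by
  have := h.1
  rwa [Matrix.det_fin_two] at this

lemma mul_mem {a b : M2 p} (ha : a ∈ SL2Zp p) (hb : b ∈ SL2Zp p) : a * b ∈ SL2Zp p := by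
  refine ⟨by rw [Matrix.det_mul, ha.1, hb.1, one_mul], fun i j => ?_⟩
  rw [Matrix.mul_apply, Fin.sum_univ_two]
  refine (norm_add_le_max _ _).trans (max_le ?_ ?_) <;>
    · rw [Padic.padicNormE.mul]
      exact mul_le_one₀ (ha.2 _ _) (norm_nonneg _) (hb.2 _ _)

/-- explicit inverse of a `2×2` determinant-one matrix -/
noncomputable def kinv (k : M2 p) : M2 p := Matrix.of !![k 1 1, -(k 0 1); -(k 1 0), k 0 0]

lemma kinv_mem {k : M2 p} (h : k ∈ SL2Zp p) : kinv k ∈ SL2Zp p := by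
  have hd := det_eq h
  constructor
  · rw [Matrix.det_fin_two]
    simp [kinv]
    linear_combination hd
  · intro i j
    fin_cases i <;> fin_cases j <;> simpa [kinv] using h.2 _ _

lemma kinv_mul {k : M2 p} (h : k ∈ SL2Zp p) : kinv k * k = 1 := by
  have hd := det_eq h
  ext i j
  fin_cases i <;> fin_cases j <;>
    · simp [kinv, Matrix.mul_apply, Fin.sum_univ_two, Matrix.one_apply]
      ring_nf
      try linear_combination hd
      try linear_combination -hd

lemma mul_mem_iff {k₀ : M2 p} (h₀ : k₀ ∈ SL2Zp p) {x : M2 p} :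
    k₀ * x ∈ SL2Zp p ↔ x ∈ SL2Zp p := by
  refine ⟨fun h => ?_, fun h => mul_mem h₀ h⟩
  have : x = kinv k₀ * (k₀ * x) := by rw [← mul_assoc, kinv_mul h₀, one_mul]
  rw [this]
  exact mul_mem (kinv_mem h₀) h

/-! ### The auxiliary families of sets -/

def Eset (p : ℕ) [Fact p.Prime] (n : ℕ) : Set (M2 p) :=
  {k | k ∈ SL2Zp p ∧ ‖k 0 0‖ ≤ (p:ℝ) ^ (-(n:ℤ)) ∧ ‖k 1 0‖ = 1}
def Dset (p : ℕ) [Fact p.Prime] (n : ℕ) : Set (M2 p) :=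
  {k | k ∈ SL2Zp p ∧ ‖k 0 0‖ = 1 ∧ ‖k 1 0‖ ≤ (p:ℝ) ^ (-(n:ℤ))}
def Sset (p : ℕ) [Fact p.Prime] (n j : ℕ) : Set (M2 p) :=
  {k | k ∈ SL2Zp p ∧ ‖k 1 0‖ = 1 ∧
    ‖k 0 0 - (j:ℚ_[p]) * (p:ℚ_[p])^n * k 1 0‖ ≤ (p:ℝ) ^ (-(n:ℤ)-1)}

lemma Eset_antitone {m n : ℕ} (h : m ≤ n) : Eset p n ⊆ Eset p m := by
  rintro k ⟨hk, h0, hc⟩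
  exact ⟨hk, h0.trans (zpow_le_zpow_right₀ (le_of_lt hp1) (by omega)), hc⟩

lemma Dset_antitone {m n : ℕ} (h : m ≤ n) : Dset p n ⊆ Dset p m := by
  rintro k ⟨hk, h0, hc⟩
  exact ⟨hk, h0, hc.trans (zpow_le_zpow_right₀ (le_of_lt hp1) (by omega))⟩

/-! ### Norm quantization and the identification of `F_n` -/

lemma norm_eq_of_le_of_not_le {x : ℚ_[p]} {m : ℤ} (h1 : ‖x‖ ≤ (p:ℝ) ^ (-m))
    (h2 : ¬ ‖x‖ ≤ (p:ℝ) ^ (-m-1)) : ‖x‖ = (p:ℝ) ^ (-m) := by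
  have hx : x ≠ 0 := by
    rintro rfl
    exact h2 (by rw [norm_zero]; positivity)
  rw [Padic.norm_eq_zpow_neg_valuation hx] at *
  have h1' : m ≤ x.valuation := by
    have := (zpow_le_zpow_iff_right₀ (hp1 (p := p))).mp h1
    omega
  have h2' : x.valuation ≤ m := by
    by_contra hc
    push_neg at hc
    exact h2 (by
      apply zpow_le_zpow_right₀ (le_of_lt hp1)
      omega)
  congr 1
  omega

lemma norm_eq_iff {x : ℚ_[p]} {m : ℤ} :
    ‖x‖ = (p:ℝ) ^ (-m) ↔ (‖x‖ ≤ (p:ℝ) ^ (-m) ∧ ¬ ‖x‖ ≤ (p:ℝ) ^ (-m-1)) := by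
  constructor
  · intro h
    refine ⟨le_of_eq h, ?_⟩
    rw [h]
    push_neg
    apply zpow_lt_zpow_right₀ hp1
    omega
  · exact fun ⟨h1, h2⟩ => norm_eq_of_le_of_not_le h1 h2

lemma F_eq_E (m : ℕ) : FsetSL2 p (m:ℤ) = Eset p m \ Eset p (m+1) := by
  have hmax : (max (m:ℤ) 0) = m := by omega
  have hmin : (min (m:ℤ) 0) = 0 := by omega
  ext k
  simp only [FsetSL2, Eset, Set.mem_sep_iff, Set.mem_diff, Set.mem_setOf_eq, hmax, hmin,
    zpow_zero]
  constructor
  · rintro ⟨hk, h1, h2⟩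
    rw [norm_eq_iff] at h1
    refine ⟨⟨hk, h1.1, h2⟩, ?_⟩
    rintro ⟨-, h3, -⟩
    exact h1.2 (by convert h3 using 2; push_cast; ring)
  · rintro ⟨⟨hk, h1, h2⟩, h3⟩
    have h4 : ¬ ‖k 0 0‖ ≤ (p:ℝ) ^ (-(m:ℤ)-1) := by
      intro h
      exact h3 ⟨hk, by convert h using 2; push_cast; ring, h2⟩
    exact ⟨hk, norm_eq_of_le_of_not_le h1 h4, h2⟩

lemma F_eq_D (m : ℕ) : FsetSL2 p (-(m:ℤ)) = Dset p m \ Dset p (m+1) := by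
  have hmax : (max (-(m:ℤ)) 0) = 0 := by omega
  have hmin : (min (-(m:ℤ)) 0) = -m := by omega
  ext k
  simp only [FsetSL2, Dset, Set.mem_sep_iff, Set.mem_diff, Set.mem_setOf_eq, hmax, hmin,
    neg_zero, zpow_zero]
  constructor
  · rintro ⟨hk, h1, h2⟩
    rw [norm_eq_iff] at h2
    refine ⟨⟨hk, h1, h2.1⟩, ?_⟩
    rintro ⟨-, -, h3⟩
    exact h2.2 (by convert h3 using 2; push_cast; ring)
  · rintro ⟨⟨hk, h1, h2⟩, h3⟩
    have h4 : ¬ ‖k 1 0‖ ≤ (p:ℝ) ^ (-(m:ℤ)-1) := by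
      intro h
      exact h3 ⟨hk, h1, by convert h using 2; push_cast; ring⟩
    exact ⟨hk, h1, norm_eq_of_le_of_not_le h2 h4⟩

/-! ### The partition of `Eset n` into `p` translates of `Eset (n+1)` -/

lemma Sset_subset (n j : ℕ) : Sset p n j ⊆ Eset p n := by
  rintro k ⟨hk, hc, hS⟩
  refine ⟨hk, ?_, hc⟩
  have h1 : ‖(j:ℚ_[p]) * (p:ℚ_[p])^n * k 1 0‖ ≤ (p:ℝ) ^ (-(n:ℤ)) := by
    rw [Padic.padicNormE.mul, Padic.padicNormE.mul, hc, mul_one, norm_p_pow']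
    have : ‖(j:ℚ_[p])‖ ≤ 1 := by
      have := Padic.norm_int_le_one (p := p) (j:ℤ)
      simpa using this
    calc ‖(j:ℚ_[p])‖ * (p:ℝ)^(-(n:ℤ)) ≤ 1 * (p:ℝ)^(-(n:ℤ)) := by
          apply mul_le_mul_of_nonneg_right this (le_of_lt (zpow_pos hp0 _))
      _ = (p:ℝ)^(-(n:ℤ)) := one_mul _
  have : k 0 0 = (k 0 0 - (j:ℚ_[p]) * (p:ℚ_[p])^n * k 1 0) + (j:ℚ_[p]) * (p:ℚ_[p])^n * k 1 0 := by
    ring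
  rw [this]
  refine (norm_add_le_max _ _).trans (max_le (hS.trans ?_) h1)
  apply zpow_le_zpow_right₀ (le_of_lt hp1)
  omega

lemma Eset_subset_iUnion (n : ℕ) :
    Eset p n ⊆ ⋃ j ∈ Finset.range p, Sset p n j := by
  rintro k ⟨hk, h0, hc⟩
  have hc0 : k 1 0 ≠ 0 := by
    intro h; rw [h, norm_zero] at hc; exact one_ne_zero hc.symm
  have hpn0 : (p:ℚ_[p])^n ≠ 0 := by
    apply pow_ne_zero
    exact_mod_cast (Nat.cast_ne_zero (R := ℚ_[p])).mpr (Fact.out : p.Prime).ne_zero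
  set d : ℚ_[p] := (p:ℚ_[p])^n * k 1 0 with hd
  have hd0 : d ≠ 0 := mul_ne_zero hpn0 hc0
  have hdn : ‖d‖ = (p:ℝ)^(-(n:ℤ)) := by rw [hd, Padic.padicNormE.mul, norm_p_pow', hc, mul_one]
  set y : ℚ_[p] := k 0 0 / d with hy
  have hy1 : ‖y‖ ≤ 1 := by
    rw [hy, norm_div, hdn, div_le_one (zpow_pos hp0 _)]
    exact h0
  set Y : ℤ_[p] := ⟨y, hy1⟩ with hY
  set j : ℕ := Y.appr 1 with hj
  have hjp : j < p := by simpa using Y.appr_lt 1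
  refine Set.mem_biUnion (Finset.mem_range.mpr hjp) ?_
  refine ⟨hk, hc, ?_⟩
  have hspec : ‖Y - (j:ℤ_[p])‖ ≤ (p:ℝ)^(-(1:ℕ):ℤ) :=
    (PadicInt.norm_le_pow_iff_mem_span_pow _ 1).mpr (by simpa using Y.appr_spec 1)
  have hq : ‖y - (j:ℚ_[p])‖ ≤ (p:ℝ)⁻¹ := by
    have : ((Y - (j:ℤ_[p]) : ℤ_[p]) : ℚ_[p]) = y - (j:ℚ_[p]) := by rw [PadicInt.coe_sub, PadicInt.coe_natCast]
    rw [← this, PadicInt.padic_norm_e_of_padicInt]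
    simpa using hspec
  have key : k 0 0 - (j:ℚ_[p]) * (p:ℚ_[p])^n * k 1 0 = (y - (j:ℚ_[p])) * d := by
    rw [hy]
    field_simp
    ring
  rw [key, Padic.padicNormE.mul, hdn]
  calc ‖y - (j:ℚ_[p])‖ * (p:ℝ)^(-(n:ℤ)) ≤ (p:ℝ)⁻¹ * (p:ℝ)^(-(n:ℤ)) := by
        apply mul_le_mul_of_nonneg_right hq (le_of_lt (zpow_pos hp0 _))
    _ = (p:ℝ)^(-(n:ℤ)-1) := by
        rw [← zpow_neg_one, ← zpow_add₀ (ne_of_gt (lt_trans one_pos hp1))]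
        ring_nf

lemma Sset_disjoint (n : ℕ) {i j : ℕ} (hi : i < p) (hj : j < p) (hij : i ≠ j) :
    Disjoint (Sset p n i) (Sset p n j) := by
  rw [Set.disjoint_left]
  rintro k ⟨-, hc, hSi⟩ ⟨-, -, hSj⟩
  have hdvd : ¬ ((p:ℤ) ∣ ((i:ℤ) - (j:ℤ))) := by
    intro h
    rw [Int.natCast_dvd] at h
    rcases Nat.eq_zero_of_dvd_of_lt h (by omega) with h'
    omega
  have hnorm1 : ‖((i:ℚ_[p]) - (j:ℚ_[p]))‖ = 1 := by
    have hle := Padic.norm_int_le_one (p := p) ((i:ℤ) - (j:ℤ))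
    have hlt := (Padic.norm_intCast_lt_one_iff (p := p) (k := (i:ℤ) - (j:ℤ))).not.mpr hdvd
    push_cast at hle hlt
    push_neg at hlt
    linarith
  have heq : ((i:ℚ_[p]) - (j:ℚ_[p])) * (p:ℚ_[p])^n * k 1 0
      = (k 0 0 - (j:ℚ_[p]) * (p:ℚ_[p])^n * k 1 0) - (k 0 0 - (i:ℚ_[p]) * (p:ℚ_[p])^n * k 1 0) := by
    ring
  have h1 : ‖((i:ℚ_[p]) - (j:ℚ_[p])) * (p:ℚ_[p])^n * k 1 0‖ = (p:ℝ)^(-(n:ℤ)) := by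
    rw [Padic.padicNormE.mul, Padic.padicNormE.mul, hnorm1, hc, one_mul, mul_one, norm_p_pow']
  rw [heq] at h1
  have h2 := (norm_sub_le_max _ _).trans (max_le hSj hSi)
  rw [h1] at h2
  have : (-(n:ℤ)) ≤ -(n:ℤ) - 1 := (zpow_le_zpow_iff_right₀ hp1).mp h2
  omega

/-! ### Translation matrices -/

noncomputable def Umat (p : ℕ) [Fact p.Prime] (n j : ℕ) : M2 p :=
  Matrix.of !![1, (j:ℚ_[p]) * (p:ℚ_[p])^n; 0, 1]
noncomputable def Wmat (p : ℕ) [Fact p.Prime] : M2 p := Matrix.of !![0, -1; 1, 0]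

lemma Umat_mem (n j : ℕ) : Umat p n j ∈ SL2Zp p := by
  constructor
  · rw [Matrix.det_fin_two]
    simp [Umat]
  · intro i l
    have h1 : ‖(j:ℚ_[p])‖ ≤ 1 := by
      have := Padic.norm_int_le_one (p := p) (j:ℤ); simpa using this
    have h2 : ‖((p:ℚ_[p])^n)‖ ≤ 1 := by
      rw [norm_p_pow', ← zpow_zero (p:ℝ)]
      exact zpow_le_zpow_right₀ (le_of_lt hp1) (by omega)
    have h3 : ‖(j:ℚ_[p]) * (p:ℚ_[p])^n‖ ≤ 1 := by
      rw [Padic.padicNormE.mul]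
      exact mul_le_one₀ h1 (norm_nonneg _) h2
    fin_cases i <;> fin_cases l <;> simp [Umat] <;>
      simpa [Padic.padicNormE.mul, norm_p_pow'] using h3

lemma Wmat_mem : Wmat p ∈ SL2Zp p := by
  constructor
  · rw [Matrix.det_fin_two]; simp [Wmat]
  · intro i l
    fin_cases i <;> fin_cases l <;> simp [Wmat]

lemma U_preimage (n j : ℕ) :
    (fun x => Umat p n j * x) ⁻¹' (Sset p n j) = Eset p (n+1) := by
  ext x
  have h00 : (Umat p n j * x) 0 0 = x 0 0 + (j:ℚ_[p]) * (p:ℚ_[p])^n * x 1 0 := by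
    simp [Umat, Matrix.mul_apply, Fin.sum_univ_two]
  have h10 : (Umat p n j * x) 1 0 = x 1 0 := by
    simp [Umat, Matrix.mul_apply, Fin.sum_univ_two]
  simp only [Set.mem_preimage, Sset, Eset, Set.mem_setOf_eq, h00, h10,
    mul_mem_iff (Umat_mem n j)]
  have e1 : x 0 0 + (j:ℚ_[p]) * (p:ℚ_[p])^n * x 1 0 - (j:ℚ_[p]) * (p:ℚ_[p])^n * x 1 0
      = x 0 0 := by ring
  rw [e1]
  have e2 : (-(n:ℤ)-1) = -((n:ℕ)+1:ℤ) := by ring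
  rw [e2]
  constructor
  · rintro ⟨h1, h2, h3⟩
    exact ⟨h1, by exact_mod_cast h3, h2⟩
  · rintro ⟨h1, h2, h3⟩
    exact ⟨h1, h3, by exact_mod_cast h2⟩

lemma W_preimage (n : ℕ) :
    (fun x => Wmat p * x) ⁻¹' (Eset p n) = Dset p n := by
  ext x
  have h00 : (Wmat p * x) 0 0 = -(x 1 0) := by
    simp [Wmat, Matrix.mul_apply, Fin.sum_univ_two]
  have h10 : (Wmat p * x) 1 0 = x 0 0 := by
    simp [Wmat, Matrix.mul_apply, Fin.sum_univ_two]
  simp only [Set.mem_preimage, Eset, Dset, Set.mem_setOf_eq, h00, h10,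
    mul_mem_iff (Wmat_mem), norm_neg]
  tauto

/-! ### Measurability -/

section Meas
variable [MeasurableSpace (M2 p)] [BorelSpace (M2 p)]

omit [MeasurableSpace (M2 p)] [BorelSpace (M2 p)] in
lemma cont_entry (i j : Fin 2) : Continuous fun k : M2 p => k i j :=
  Continuous.matrix_elem continuous_id i j

omit [MeasurableSpace (M2 p)] [BorelSpace (M2 p)] in
lemma closed_SL2Zp : IsClosed (SL2Zp p) := by
  have : SL2Zp p = (fun k : M2 p => Matrix.det k) ⁻¹' {1} ∩
      ⋂ i, ⋂ j, (fun k : M2 p => ‖k i j‖) ⁻¹' Set.Iic 1 := by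
    ext k; simp [SL2Zp]
  rw [this]
  exact (isClosed_singleton.preimage (continuous_id.matrix_det)).inter
    (isClosed_iInter fun i => isClosed_iInter fun j =>
      isClosed_Iic.preimage (cont_entry i j).norm)

lemma meas_SL2Zp : MeasurableSet (SL2Zp p) := closed_SL2Zp.measurableSet

lemma meas_Eset (n : ℕ) : MeasurableSet (Eset p n) := by
  have : Eset p n = SL2Zp p ∩ ((fun k : M2 p => ‖k 0 0‖) ⁻¹' Set.Iic ((p:ℝ) ^ (-(n:ℤ))) ∩
      (fun k : M2 p => ‖k 1 0‖) ⁻¹' {1}) := by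
    ext k; simp [Eset, Set.mem_setOf_eq]; tauto
  rw [this]
  exact (closed_SL2Zp.inter ((isClosed_Iic.preimage (cont_entry 0 0).norm).inter
    (isClosed_singleton.preimage (cont_entry 1 0).norm))).measurableSet

lemma meas_Dset (n : ℕ) : MeasurableSet (Dset p n) := by
  have : Dset p n = SL2Zp p ∩ ((fun k : M2 p => ‖k 0 0‖) ⁻¹' {1} ∩
      (fun k : M2 p => ‖k 1 0‖) ⁻¹' Set.Iic ((p:ℝ) ^ (-(n:ℤ)))) := by
    ext k; simp [Dset, Set.mem_setOf_eq]; tauto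
  rw [this]
  exact (closed_SL2Zp.inter ((isClosed_singleton.preimage (cont_entry 0 0).norm).inter
    (isClosed_Iic.preimage (cont_entry 1 0).norm))).measurableSet

lemma meas_Sset (n j : ℕ) : MeasurableSet (Sset p n j) := by
  have : Sset p n j = SL2Zp p ∩ ((fun k : M2 p => ‖k 1 0‖) ⁻¹' {1} ∩
      (fun k : M2 p => ‖k 0 0 - (j:ℚ_[p]) * (p:ℚ_[p])^n * k 1 0‖) ⁻¹'
        Set.Iic ((p:ℝ) ^ (-(n:ℤ)-1))) := by
    ext k; simp [Sset, Set.mem_setOf_eq]; tauto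
  rw [this]
  exact (closed_SL2Zp.inter ((isClosed_singleton.preimage (cont_entry 1 0).norm).inter
    (isClosed_Iic.preimage ((cont_entry 0 0).sub
      (continuous_const.mul (cont_entry 1 0))).norm))).measurableSet

lemma meas_F (n : ℤ) : MeasurableSet (FsetSL2 p n) := by
  have : FsetSL2 p n = SL2Zp p ∩ ((fun k : M2 p => ‖k 0 0‖) ⁻¹' {(p:ℝ) ^ (-(max n 0))} ∩
      (fun k : M2 p => ‖k 1 0‖) ⁻¹' {(p:ℝ) ^ (min n 0)}) := by
    ext k; simp [FsetSL2, Set.mem_setOf_eq]; tauto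
  rw [this]
  exact (closed_SL2Zp.inter ((isClosed_singleton.preimage (cont_entry 0 0).norm).inter
    (isClosed_singleton.preimage (cont_entry 1 0).norm))).measurableSet

end Meas

/-! ### Unit-sphere property -/

lemma max_norm_eq_one {k : M2 p} (h : k ∈ SL2Zp p) : ‖k 0 0‖ = 1 ∨ ‖k 1 0‖ = 1 := by
  by_contra hc
  push_neg at hc
  have h00 : ‖k 0 0‖ < 1 := lt_of_le_of_ne (h.2 0 0) hc.1
  have h10 : ‖k 1 0‖ < 1 := lt_of_le_of_ne (h.2 1 0) hc.2
  have hd := det_eq h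
  have : (1:ℝ) = ‖k 0 0 * k 1 1 - k 0 1 * k 1 0‖ := by rw [hd]; simp
  have hle : ‖k 0 0 * k 1 1 - k 0 1 * k 1 0‖ < 1 := by
    refine lt_of_le_of_lt (norm_sub_le_max _ _) (max_lt ?_ ?_)
    · rw [Padic.padicNormE.mul]
      calc ‖k 0 0‖ * ‖k 1 1‖ ≤ ‖k 0 0‖ * 1 :=
            mul_le_mul_of_nonneg_left (h.2 1 1) (norm_nonneg _)
        _ = ‖k 0 0‖ := mul_one _
        _ < 1 := h00
    · rw [Padic.padicNormE.mul]
      calc ‖k 0 1‖ * ‖k 1 0‖ ≤ 1 * ‖k 1 0‖ :=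
            mul_le_mul_of_nonneg_right (h.2 0 1) (norm_nonneg _)
        _ = ‖k 1 0‖ := one_mul _
        _ < 1 := h10
  linarith

end SL2aux

open SL2aux
/-- The sets `F_n`, `n ∈ ℤ`, cover `SL(2, ℤ_p)` up to a null set for the Haar probability
measure `λ` of `SL(2, ℤ_p)`, and `λ(F_n) = ((p−1)/(p+1)) p^{−|n|}` for every `n ∈ ℤ`. -/
theorem haar_measure_Fn {p : ℕ} [Fact p.Prime]
    [MeasurableSpace (Matrix (Fin 2) (Fin 2) ℚ_[p])]
    [BorelSpace (Matrix (Fin 2) (Fin 2) ℚ_[p])]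
    (μ : Measure (Matrix (Fin 2) (Fin 2) ℚ_[p])) [IsProbabilityMeasure μ]
    (hsupp : μ (SL2Zp p)ᶜ = 0)
    (hinv : ∀ k₀ ∈ SL2Zp p, Measure.map (fun x => k₀ * x) μ = μ) :
    μ (⋃ n : ℤ, FsetSL2 p n) = 1 ∧
      ∀ n : ℤ, μ (FsetSL2 p n) =
        ENNReal.ofReal ((((p : ℝ) - 1) / ((p : ℝ) + 1)) * (p : ℝ) ^ (-|n|)) := by
  have hp1' : (1:ℝ) < (p:ℝ) := hp1
  have hp0' : (0:ℝ) < (p:ℝ) := hp0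
  have hpE0 : (p : ENNReal) ≠ 0 := by
    simp [(Fact.out : p.Prime).ne_zero]
  have hpEtop : (p : ENNReal) ≠ ⊤ := ENNReal.natCast_ne_top p
  -- invariance of μ under left multiplication
  have key : ∀ k₀ ∈ SL2Zp p, ∀ B : Set (M2 p), MeasurableSet B →
      μ ((fun x => k₀ * x) ⁻¹' B) = μ B := by
    intro k₀ h₀ B hB
    have hcont : Continuous fun x : M2 p => k₀ * x := continuous_const.matrix_mul continuous_id
    conv_rhs => rw [← hinv k₀ h₀]
    rw [Measure.map_apply hcont.measurable hB]
  -- each Sset piece has the measure of Eset (n+1)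
  have μS : ∀ n j : ℕ, μ (Sset p n j) = μ (Eset p (n+1)) := by
    intro n j
    rw [← key (Umat p n j) (Umat_mem n j) _ (meas_Sset n j), U_preimage]
  -- recursion
  have μE_succ : ∀ n : ℕ, μ (Eset p n) = p * μ (Eset p (n+1)) := by
    intro n
    have hcover : Eset p n = ⋃ j ∈ Finset.range p, Sset p n j := by
      apply Set.Subset.antisymm (Eset_subset_iUnion n)
      exact Set.iUnion₂_subset fun j _ => Sset_subset n j
    rw [hcover, measure_biUnion_finset ?hd (fun j _ => meas_Sset n j)]
    · rw [Finset.sum_congr rfl (fun j _ => μS n j), Finset.sum_const, Finset.card_range,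
        nsmul_eq_mul]
    case hd =>
      intro i hi j hj hij
      exact Sset_disjoint n (Finset.mem_range.mp hi) (Finset.mem_range.mp hj) hij
  have μD : ∀ n : ℕ, μ (Dset p n) = μ (Eset p n) := by
    intro n
    rw [← key (Wmat p) Wmat_mem _ (meas_Eset n), W_preimage]
  -- ENNReal bound : μ (Eset n) ≤ p⁻¹ ^ n
  have μE_le : ∀ n : ℕ, μ (Eset p n) ≤ ((p:ENNReal)⁻¹) ^ n := by
    intro n
    induction n with
    | zero => simpa using prob_le_one
    | succ n ih =>
      have : μ (Eset p (n+1)) = (p:ENNReal)⁻¹ * μ (Eset p n) := by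
        rw [μE_succ n, ← mul_assoc, ENNReal.inv_mul_cancel hpE0 hpEtop, one_mul]
      rw [this, pow_succ, mul_comm ((p:ENNReal)⁻¹ ^ n)]
      exact mul_le_mul_right ih _
  have htends : Filter.Tendsto (fun n : ℕ => ((p:ENNReal)⁻¹) ^ n) Filter.atTop (nhds 0) :=
    ENNReal.tendsto_pow_atTop_nhds_zero_of_lt_one
      (ENNReal.inv_lt_one.mpr (by exact_mod_cast (Fact.out : p.Prime).one_lt))
  have hEinf : μ (⋂ n : ℕ, Eset p n) = 0 := by
    refine le_antisymm (ge_of_tendsto' htends fun n => ?_) zero_le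
    exact (measure_mono (Set.iInter_subset _ n)).trans (μE_le n)
  have hDinf : μ (⋂ n : ℕ, Dset p n) = 0 := by
    refine le_antisymm (ge_of_tendsto' htends fun n => ?_) zero_le
    exact (measure_mono (Set.iInter_subset _ n)).trans ((μD n).le.trans (μE_le n))
  -- μ (SL2Zp) = 1
  have μSL : μ (SL2Zp p) = 1 := by
    have h := measure_add_measure_compl (μ := μ) (meas_SL2Zp (p := p))
    rw [hsupp, add_zero] at h
    simpa using h
  -- SL2Zp ⊆ E0 ∪ D0
  have cover_ED : SL2Zp p ⊆ Eset p 0 ∪ Dset p 0 := by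
    intro k hk
    rcases max_norm_eq_one hk with h | h
    · right
      exact ⟨hk, h, by simpa using hk.2 1 0⟩
    · left
      exact ⟨hk, by simpa using hk.2 0 0, h⟩
  have hED1 : μ (Eset p 0 ∪ Dset p 0) = 1 :=
    le_antisymm prob_le_one (μSL ▸ measure_mono cover_ED)
  -- E0 ∩ D0 = F 0
  have hEDF : Eset p 0 ∩ Dset p 0 = FsetSL2 p 0 := by
    ext k
    simp only [Eset, Dset, FsetSL2, Set.mem_inter_iff, Set.mem_setOf_eq, Set.mem_sep_iff,
      max_self, neg_zero, min_self, zpow_zero]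
    constructor
    · rintro ⟨⟨hk, -, h10⟩, ⟨-, h00, -⟩⟩
      exact ⟨hk, h00, h10⟩
    · rintro ⟨hk, h00, h10⟩
      exact ⟨⟨hk, le_of_eq h00, h10⟩, ⟨hk, h00, le_of_eq h10⟩⟩
  -- real-valued measures
  set r : ℕ → ℝ := fun n => (μ (Eset p n)).toReal with hr_def
  have hr_succ : ∀ n : ℕ, r n = p * r (n+1) := by
    intro n
    rw [hr_def]
    simp only
    rw [μE_succ n, ENNReal.toReal_mul]
    simp
  have hr_pow : ∀ n : ℕ, r n = r 0 * ((p:ℝ)⁻¹)^n := by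
    intro n
    induction n with
    | zero => simp
    | succ n ih =>
      have := hr_succ n
      have hrn1 : r (n+1) = r n / p := by
        field_simp [ne_of_gt hp0'] at this ⊢
        linarith
      rw [hrn1, ih, pow_succ]
      field_simp
  -- measure of F for nonnegative n, in ENNReal and ℝ
  have μF_nat : ∀ m : ℕ, (μ (FsetSL2 p (m:ℤ))).toReal = r m - r (m+1) := by
    intro m
    rw [F_eq_E m, measure_diff (Eset_antitone (by omega)) (meas_Eset (m+1)).nullMeasurableSet
      (measure_ne_top μ _)]
    rw [ENNReal.toReal_sub_of_le (measure_mono (Eset_antitone (by omega))) (measure_ne_top μ _)]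
  have μF_neg : ∀ m : ℕ, (μ (FsetSL2 p (-(m:ℤ)))).toReal = r m - r (m+1) := by
    intro m
    rw [F_eq_D m, measure_diff (Dset_antitone (by omega)) (meas_Dset (m+1)).nullMeasurableSet
      (measure_ne_top μ _)]
    rw [ENNReal.toReal_sub_of_le (measure_mono (Dset_antitone (by omega))) (measure_ne_top μ _),
      μD m, μD (m+1)]
  -- inclusion-exclusion to pin down r 0
  have hIE : (1:ℝ) + (r 0 - r 1) = r 0 + r 0 := by
    have h := measure_union_add_inter (μ := μ) (Eset p 0) (meas_Dset (p := p) 0)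
    rw [hED1, hEDF, μD 0] at h
    have h' := congrArg ENNReal.toReal h
    rw [ENNReal.toReal_add (by simp) (measure_ne_top μ _),
      ENNReal.toReal_add (measure_ne_top μ _) (measure_ne_top μ _)] at h'
    have h0 := μF_nat 0
    simp only [Nat.cast_zero] at h0
    rw [ENNReal.toReal_one] at h'
    rw [h0] at h'
    exact h'
  have hr0 : r 0 = (p:ℝ) / ((p:ℝ) + 1) := by
    have h1 : r 1 = r 0 * (p:ℝ)⁻¹ := by rw [hr_pow 1]; ring
    rw [h1] at hIE
    have hp1ne : (p:ℝ) + 1 ≠ 0 := by positivity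
    field_simp at hIE ⊢
    linarith
  -- the common value of the differences
  have hdiff : ∀ m : ℕ, r m - r (m+1) =
      (((p:ℝ) - 1) / ((p:ℝ) + 1)) * ((p:ℝ)⁻¹)^m := by
    intro m
    rw [hr_pow m, hr_pow (m+1), hr0, pow_succ]
    have hp1ne : (p:ℝ) + 1 ≠ 0 := by positivity
    field_simp
  -- the measure formula for every n
  have main2 : ∀ n : ℤ, μ (FsetSL2 p n) =
      ENNReal.ofReal ((((p : ℝ) - 1) / ((p : ℝ) + 1)) * (p : ℝ) ^ (-|n|)) := by
    intro n
    have habs : (p:ℝ) ^ (-|n|) = ((p:ℝ)⁻¹)^(n.natAbs) := by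
      rw [Int.abs_eq_natAbs, zpow_neg, inv_pow, zpow_natCast]
    have hto : (μ (FsetSL2 p n)).toReal = r n.natAbs - r (n.natAbs + 1) := by
      rcases Int.natAbs_eq n with h | h
      · conv_lhs => rw [h]
        exact μF_nat n.natAbs
      · conv_lhs => rw [h]
        exact μF_neg n.natAbs
    rw [← ENNReal.ofReal_toReal (measure_ne_top μ (FsetSL2 p n)), hto, hdiff, habs]
  refine ⟨?_, main2⟩
  -- full measure of the union
  have cover : Set.univ ⊆ (⋃ n : ℤ, FsetSL2 p n) ∪
      ((⋂ n : ℕ, Eset p n) ∪ ((⋂ n : ℕ, Dset p n) ∪ (SL2Zp p)ᶜ)) := by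
    intro k _
    by_cases hk : k ∈ SL2Zp p
    · rcases max_norm_eq_one hk with h00 | h10
      · -- ‖k 0 0‖ = 1
        by_cases hc : k 1 0 = 0
        · right; right; left
          refine Set.mem_iInter.mpr fun n => ⟨hk, h00, ?_⟩
          rw [hc, norm_zero]
          exact le_of_lt (zpow_pos hp0' _)
        · left
          have hval : 0 ≤ (k 1 0).valuation :=
            (Padic.norm_le_one_iff_val_nonneg _).mp (hk.2 1 0)
          refine Set.mem_iUnion.mpr ⟨-(k 1 0).valuation, hk, ?_, ?_⟩
          · rw [max_eq_right (by omega), neg_zero, zpow_zero]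
            exact h00
          · rw [min_eq_left (by omega)]
            exact Padic.norm_eq_zpow_neg_valuation hc
      · -- ‖k 1 0‖ = 1
        by_cases hc : k 0 0 = 0
        · right; left
          refine Set.mem_iInter.mpr fun n => ⟨hk, ?_, h10⟩
          rw [hc, norm_zero]
          exact le_of_lt (zpow_pos hp0' _)
        · left
          have hval : 0 ≤ (k 0 0).valuation :=
            (Padic.norm_le_one_iff_val_nonneg _).mp (hk.2 0 0)
          refine Set.mem_iUnion.mpr ⟨(k 0 0).valuation, hk, ?_, ?_⟩
          · rw [max_eq_left (by omega)]
            exact Padic.norm_eq_zpow_neg_valuation hc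
          · rw [min_eq_right (by omega), zpow_zero]
            exact h10
    · right; right; right
      exact hk
  have hle : (1:ENNReal) ≤ μ (⋃ n : ℤ, FsetSL2 p n) := by
    calc (1:ENNReal) = μ Set.univ := (measure_univ).symm
      _ ≤ μ ((⋃ n : ℤ, FsetSL2 p n) ∪
          ((⋂ n : ℕ, Eset p n) ∪ ((⋂ n : ℕ, Dset p n) ∪ (SL2Zp p)ᶜ))) := measure_mono cover
      _ ≤ μ (⋃ n : ℤ, FsetSL2 p n) +
          μ ((⋂ n : ℕ, Eset p n) ∪ ((⋂ n : ℕ, Dset p n) ∪ (SL2Zp p)ᶜ)) := measure_union_le _ _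
      _ ≤ μ (⋃ n : ℤ, FsetSL2 p n) +
          (μ (⋂ n : ℕ, Eset p n) + (μ (⋂ n : ℕ, Dset p n) + μ (SL2Zp p)ᶜ)) := by
            gcongr
            exact (measure_union_le _ _).trans (by gcongr; exact measure_union_le _ _)
      _ = μ (⋃ n : ℤ, FsetSL2 p n) := by rw [hEinf, hDinf, hsupp]; simp
  exact le_antisymm prob_le_one hle
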